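/- Let O be a non-empty 1-orientation on a graph G and let e be its bioriented edge. The following are equivalent: (a) O is e-rooted; (b) t^O(Z) > 0 for every nonempty Z ⊆ V with e not an edge of G[Z]; (c) t^O(Z) > 0 for every nonempty Z ⊆ V such that G[Z] is connected and e is not an edge of G[Z]; (d) |d^O_Z| > g(Z) − 1 for every Z ⊊ V such that G[Z] is connected. -/

import Mathlib

/-!
Common framework: finite vertex-weighted multigraphs (loops and multiple edges
allowed), generalized orientations, divisors, contractions, and poset gadgets.

A graph is encoded by a finite set `V ⊆ ℕ` of vertices, a finite set `E ⊆ ℕ`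
of edges, an "ends" function assigning to each edge its ordered pair of
end-vertices (the two components encode the two half-edges), and a weight
function `w : ℕ → ℕ`.

A generalized orientation is a function `ℕ → Option EdgeDir`, where `none`
means the edge is absent (an orientation on a spanning subgraph `G − S` takes
the value `none` exactly on edges outside `E \ S`), `fwd`/`bwd` give the edge a
single direction, and `bi` makes the edge bioriented.
-/

open scoped Classical
open Finset

/-- Direction of an edge under a generalized orientation. -/
inductive EdgeDir : Type
  | fwd
  | bwd
  | bi
deriving DecidableEq

/-- Generalized orientation data. -/
abbrev Orient : Type := ℕ → Option EdgeDir

/-- The number of ending (target) half-edges at the vertex `v` of an edge with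
end-pair `p`, given its direction `d`.  A one-way oriented edge has exactly
one target end; a bioriented edge has both ends as targets. -/
def dirT : Option EdgeDir → ℕ × ℕ → ℕ → ℕ
  | none, _, _ => 0
  | some EdgeDir.fwd, p, v => if p.2 = v then 1 else 0
  | some EdgeDir.bwd, p, v => if p.1 = v then 1 else 0
  | some EdgeDir.bi, p, v => (if p.1 = v then 1 else 0) + (if p.2 = v then 1 else 0)

/-- Restriction of orientation data to the set `D` of kept edges. -/
def restr (O : Orient) (D : Finset ℕ) : Orient := fun e => if e ∈ D then O e else none

/-- A finite vertex-weighted multigraph. -/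
structure MGraph : Type where
  V : Finset ℕ
  E : Finset ℕ
  ends : ℕ → ℕ × ℕ
  w : ℕ → ℕ
  ends_mem : ∀ e ∈ E, (ends e).1 ∈ V ∧ (ends e).2 ∈ V

namespace MGraph

variable (G : MGraph)

/-- Edge set of the induced subgraph `(G−S)[Z]`: edges of `G − S` with both
ends in `Z`. -/
def indEdges (S Z : Finset ℕ) : Finset ℕ :=
  (G.E \ S).filter fun e => (G.ends e).1 ∈ Z ∧ (G.ends e).2 ∈ Z

/-- The cut `E(Z, Zᶜ)` in `G − S`: edges of `G − S` with exactly one end in `Z`. -/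
def cutEdges (S Z : Finset ℕ) : Finset ℕ :=
  (G.E \ S).filter fun e =>
    ((G.ends e).1 ∈ Z ∧ (G.ends e).2 ∉ Z) ∨ ((G.ends e).1 ∉ Z ∧ (G.ends e).2 ∈ Z)

/-- Adjacency via an edge belonging to `F ∩ E`. -/
def adjOn (F : Finset ℕ) (u v : ℕ) : Prop :=
  ∃ e ∈ F ∩ G.E, G.ends e = (u, v) ∨ G.ends e = (v, u)

/-- Number of connected components of the subgraph with vertex set `W` and
edge set `F`. -/
noncomputable def ncomp (W F : Finset ℕ) : ℕ :=
  Nat.card (Quot (fun u v : {x : ℕ // x ∈ W} => G.adjOn F u.1 v.1))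

/-- The subgraph with vertex set `W` and edge set `F` is connected. -/
def ConnSub (W F : Finset ℕ) : Prop := G.ncomp W F = 1

/-- `G` is connected. -/
def Connected : Prop := G.ConnSub G.V G.E

/-- Genus of the subgraph with vertex set `W` and edge set `F`:
`∑_{v ∈ W} w(v) − |W| + |F| + c`. -/
noncomputable def subGenus (W F : Finset ℕ) : ℤ :=
  (∑ v ∈ W, (G.w v : ℤ)) - (W.card : ℤ) + (((F ∩ G.E).card : ℤ)) + (G.ncomp W F : ℤ)

/-- The genus of `G`. -/
noncomputable def genus : ℤ := G.subGenus G.V G.E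

/-- The degree of a vertex: the number of half-edges having `v` as end. -/
def deg (v : ℕ) : ℕ :=
  ∑ e ∈ G.E, ((if (G.ends e).1 = v then 1 else 0) + (if (G.ends e).2 = v then 1 else 0))

/-- `e` is a bridge of `G − S`: removing it increases the number of connected
components. -/
def IsBridge (S : Finset ℕ) (e : ℕ) : Prop :=
  e ∈ G.E \ S ∧ G.ncomp G.V (G.E \ S) < G.ncomp G.V (G.E \ insert e S)

/-- The set of bridges of `G − S`. -/
noncomputable def bridges (S : Finset ℕ) : Finset ℕ := (G.E \ S).filter (G.IsBridge S)

/-- `T` is a cut of `G`, i.e. `T = E(Z, Zᶜ)` for some `∅ ⊊ Z ⊊ V`. -/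
def IsCut (T : Finset ℕ) : Prop :=
  ∃ Z, Z ⊆ G.V ∧ Z.Nonempty ∧ Z ≠ G.V ∧ T = G.cutEdges ∅ Z

/-- `W` is (the vertex set of) a connected component of `G − S`. -/
def IsCompOf (S W : Finset ℕ) : Prop :=
  W ⊆ G.V ∧ W.Nonempty ∧ G.ConnSub W (G.indEdges S W) ∧ G.cutEdges S W = ∅

/-- The poset `A^b_G`: for `b = 0` the sets `S ⊆ E` with `G − S` bridgeless,
for `b = 1` the sets `S ⊆ E` with `G − S` connected. -/
def Ab (b : ℕ) (S : Finset ℕ) : Prop :=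
  S ⊆ G.E ∧ ((b = 0 ∧ ∀ e, ¬ G.IsBridge S e) ∨ (b = 1 ∧ G.ConnSub G.V (G.E \ S)))

/-- `G` is a stable graph of genus `g`: connected, of genus `g`, and every
vertex of weight `0` has degree at least `3`. -/
noncomputable def Stable (g : ℕ) : Prop :=
  G.Connected ∧ G.genus = (g : ℤ) ∧ ∀ v ∈ G.V, G.w v = 0 → 3 ≤ G.deg v

/-! ### Generalized orientations on spanning subgraphs -/

/-- `O` is orientation data for the spanning subgraph `G − S` (it is defined
exactly on the edges of `G − S`). -/
def IsOrientOn (S : Finset ℕ) (O : Orient) : Prop :=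
  ∀ e, O e ≠ none ↔ e ∈ G.E \ S

/-- The set of bioriented edges of `O`. -/
def biE (O : Orient) : Finset ℕ := G.E.filter fun e => O e = some EdgeDir.bi

/-- `t^O_v`: the number of half-edges having `v` as target. -/
def tOr (O : Orient) (v : ℕ) : ℕ := ∑ e ∈ G.E, dirT (O e) (G.ends e) v

/-- `t^O(Z)`: the number of edges of `G − S` not contained in `(G−S)[Z]`
having a target in `Z`. -/
def tCut (S : Finset ℕ) (O : Orient) (Z : Finset ℕ) : ℕ :=
  ∑ e ∈ (G.E \ S) \ G.indEdges S Z, ∑ v ∈ Z, dirT (O e) (G.ends e) v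

/-- The divisor `d^O` of a `b`-orientation `O` on `G − S`:
`d^O_v = w(v) − 1 + t^O_v` if `G − S` has edges, and `d^O_v = w(v) − 1 + b`
otherwise; it is supported on `V`. -/
noncomputable def divOr (S : Finset ℕ) (b : ℕ) (O : Orient) : ℕ → ℤ :=
  fun v => if v ∈ G.V then
      (if G.E \ S = ∅ then (G.w v : ℤ) - 1 + (b : ℤ) else (G.w v : ℤ) - 1 + (G.tOr O v : ℤ))
    else 0

/-- Equivalence of generalized orientations on `G − S`:  both are orientations
on `G − S` and they have the same divisor. -/
noncomputable def equivOr (S : Finset ℕ) (b : ℕ) (O O' : Orient) : Prop :=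
  G.IsOrientOn S O ∧ G.IsOrientOn S O' ∧ G.divOr S b O = G.divOr S b O'

/-- `O` is a totally cyclic orientation on `G − S`: every nonempty cut
`E(Z,Zᶜ)` contains an edge with target in `Z` and an edge with target in `Zᶜ`. -/
def TotCyc (S : Finset ℕ) (O : Orient) : Prop :=
  ∀ Z : Finset ℕ, Z ⊆ G.V → Z.Nonempty → Z ≠ G.V → (G.cutEdges S Z).Nonempty →
    (∃ e ∈ G.cutEdges S Z, ∃ v ∈ Z, 0 < dirT (O e) (G.ends e) v) ∧
    (∃ e ∈ G.cutEdges S Z, ∃ v ∈ G.V \ Z, 0 < dirT (O e) (G.ends e) v)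

/-- `O` is `e₀`-rooted on `G − S`: for every `Z ⊊ V` with `e₀` an edge of
`(G−S)[Z]`, the cut `E(Z,Zᶜ)` contains an edge with target in `Zᶜ`. -/
def RootedAt (S : Finset ℕ) (O : Orient) (e₀ : ℕ) : Prop :=
  ∀ Z : Finset ℕ, Z ⊆ G.V → Z ≠ G.V → e₀ ∈ G.indEdges S Z →
    ∃ e ∈ G.cutEdges S Z, ∃ v ∈ G.V \ Z, 0 < dirT (O e) (G.ends e) v

/-- `O` is a rooted `1`-orientation on `G − S`:  it has exactly one bioriented
edge, at which it is rooted.  By convention, if `G − S` consists of a single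
vertex (and no edges), the empty orientation is rooted. -/
def Rooted1 (S : Finset ℕ) (O : Orient) : Prop :=
  (∃ e₀, G.biE O = {e₀} ∧ G.RootedAt S O e₀) ∨ (G.E \ S = ∅ ∧ G.V.card = 1)

/-- `O ∈ 𝒪^b(G−S)`:  for `b = 0`, a totally cyclic orientation on `G − S`;
for `b = 1`, a rooted `1`-orientation on `G − S`. -/
def MemOb (S : Finset ℕ) (b : ℕ) (O : Orient) : Prop :=
  G.IsOrientOn S O ∧
    ((b = 0 ∧ G.biE O = ∅ ∧ G.TotCyc S O) ∨ (b = 1 ∧ G.Rooted1 S O))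

/-- `O` is a `b`-orientation on `G − S` (exactly `b` bioriented edges; by
convention the empty orientation on a one-vertex edgeless graph counts as a
`1`-orientation). -/
def IsbOr (S : Finset ℕ) (b : ℕ) (O : Orient) : Prop :=
  G.IsOrientOn S O ∧
    ((G.biE O).card = b ∨ (G.E \ S = ∅ ∧ G.V.card = 1 ∧ b = 1))

/-! ### Posets of orientations on spanning subgraphs -/

/-- The order of `𝒪𝒫^b_G` on pairs `(S, O_S)`:  `(S,O_S) ≤ (T,O_T)` iff
`T ⊆ S` and the restriction of `O_T` to `G − S` is `O_S`. -/
def leOP (p q : Finset ℕ × Orient) : Prop :=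
  q.1 ⊆ p.1 ∧ restr q.2 (G.E \ p.1) = p.2

/-- The order of `𝒪̄𝒫^b_G` on pairs (representing classes): `(S,O̅_S) ≤ (T,O̅_T)`
iff `T ⊆ S` and some representative of `O̅_T` restricts on `G − S` to some
representative of `O̅_S`. -/
noncomputable def leOPbar (b : ℕ) (p q : Finset ℕ × Orient) : Prop :=
  q.1 ⊆ p.1 ∧ ∃ O', G.equivOr q.1 b O' q.2 ∧
    G.equivOr p.1 b (restr O' (G.E \ p.1)) p.2

/-- Equality in `𝒪̄𝒫^b_G`: same subgraph and equivalent orientations. -/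
noncomputable def eqOP (b : ℕ) (p q : Finset ℕ × Orient) : Prop :=
  p.1 = q.1 ∧ G.equivOr p.1 b p.2 q.2

/-- Membership in `𝒪𝒫^b_G`. -/
def POb (b : ℕ) (p : Finset ℕ × Orient) : Prop :=
  G.Ab b p.1 ∧ G.MemOb p.1 b p.2

/-! ### Stable divisors -/

/-- Stable divisors on `G − S` of degree `g(G−S) − c(G−S) + b` (`b = 0, 1`):
for `b = 1`, `G − S` is connected, the degree is `g(G−S)` and
`|d_Z| > g(Z) − 1` for every `Z ⊆ V`; for `b = 0`, the restriction of `d` to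
every connected component `W` of `G − S` has degree `g(W) − 1` and satisfies
`|d_Z| > g(Z) − 1` for every `∅ ≠ Z ⊊ W`. -/
noncomputable def StableDiv (S : Finset ℕ) (b : ℕ) (d : ℕ → ℤ) : Prop :=
  (∀ v, v ∉ G.V → d v = 0) ∧
  ((b = 1 ∧ G.ConnSub G.V (G.E \ S) ∧
      (∑ v ∈ G.V, d v) = G.subGenus G.V (G.E \ S) ∧
      ∀ Z ⊆ G.V, G.subGenus Z (G.indEdges S Z) - 1 < ∑ v ∈ Z, d v) ∨
   (b = 0 ∧ ∀ W, G.IsCompOf S W →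
      (∑ v ∈ W, d v) = G.subGenus W (G.indEdges S W) - 1 ∧
      ∀ Z ⊆ W, Z.Nonempty → Z ≠ W →
        G.subGenus Z (G.indEdges S Z) - 1 < ∑ v ∈ Z, d v))

/-! ### Contractions -/

/-- The relation identifying the two ends of each edge in `S₀`. -/
def conRel (S₀ : Finset ℕ) (u v : ℕ) : Prop :=
  ∃ e ∈ S₀ ∩ G.E, G.ends e = (u, v) ∨ G.ends e = (v, u)

/-- Representative (the least element) of the class of `v` under the
equivalence generated by identifying the ends of the edges in `S₀`. -/
noncomputable def crep (S₀ : Finset ℕ) (v : ℕ) : ℕ :=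
  sInf {u | Relation.EqvGen (G.conRel S₀) u v}

/-- The (weighted) edge contraction `G/S₀`: every connected component of the
subgraph spanned by `S₀` is contracted to a single vertex, whose weight is the
genus of that component; `E(G/S₀) = E(G) \ S₀`. -/
noncomputable def contract (S₀ : Finset ℕ) : MGraph where
  V := G.V.image (G.crep S₀)
  E := G.E \ S₀
  ends := fun e => (G.crep S₀ (G.ends e).1, G.crep S₀ (G.ends e).2)
  w := fun v =>
    (G.subGenus (G.V.filter fun u => G.crep S₀ u = v)
      (G.indEdges (G.E \ S₀) (G.V.filter fun u => G.crep S₀ u = v))).toNat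
  ends_mem := by
    intro e he
    rw [Finset.mem_sdiff] at he
    exact ⟨Finset.mem_image_of_mem _ (G.ends_mem e he.1).1,
           Finset.mem_image_of_mem _ (G.ends_mem e he.1).2⟩

/-- Deletion of the edges in `T` (a spanning subgraph, as a graph). -/
def ddel (T : Finset ℕ) : MGraph where
  V := G.V
  E := G.E \ T
  ends := G.ends
  w := G.w
  ends_mem := fun e he => G.ends_mem e (Finset.mem_sdiff.mp he).1

/-- Pullback `γ* T` of an edge set along the contraction `γ : G → G/S₀`:
`T ∪ (G−T)_br` for `b = 0`, and `T` for `b = 1`. -/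
noncomputable def pullStar (b : ℕ) (T : Finset ℕ) : Finset ℕ :=
  if b = 0 then T ∪ G.bridges T else T

/-- Pushforward of a divisor along the contraction `γ : G → G/S₀`:
`(γ_* d)_v = ∑_{z ∈ γ⁻¹(v)} d_z`. -/
noncomputable def pushDiv (S₀ : Finset ℕ) (d : ℕ → ℤ) : ℕ → ℤ :=
  fun v => ∑ z ∈ G.V.filter (fun u => G.crep S₀ u = v), d z

/-- The divisor `c^{γ,S}` on `G/S₀`: `c^{γ,S}_v = #{e ∈ S₀ ∩ S : γ(e) = v}`. -/
noncomputable def cGamma (S₀ S : Finset ℕ) : ℕ → ℤ :=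
  fun v => ((((S₀ ∩ S) ∩ G.E).filter (fun e => G.crep S₀ (G.ends e).1 = v)).card : ℤ)

/-- The relation "`q` is a value of `γ̄_*` at `p`" for the contraction
`γ : G → G/S₀` acting on classes of orientations: `q` is the restriction to
`(G/S₀) − γ_* S` of a representative of the class of `p` having no bioriented
edge in `S₀` (when `(G/S₀) − γ_*S` has no edges, any representative serves). -/
noncomputable def pushRel (S₀ : Finset ℕ) (b : ℕ) (p q : Finset ℕ × Orient) : Prop :=
  ∃ O', G.equivOr p.1 b O' p.2 ∧
    ((∀ e ∈ S₀, O' e ≠ some EdgeDir.bi) ∨ G.E \ (S₀ ∪ p.1) = ∅) ∧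
    q.1 = p.1 \ S₀ ∧ q.2 = restr O' (G.E \ (S₀ ∪ p.1))

/-! ### Isomorphisms and directed reachability -/

/-- `(fV, fE)` is an isomorphism from `G` to `H`. -/
def IsoMaps (H : MGraph) (fV fE : ℕ → ℕ) : Prop :=
  Set.BijOn fV ↑G.V ↑H.V ∧ Set.BijOn fE ↑G.E ↑H.E ∧
  (∀ e ∈ G.E, H.ends (fE e) = (fV (G.ends e).1, fV (G.ends e).2) ∨
              H.ends (fE e) = (fV (G.ends e).2, fV (G.ends e).1)) ∧
  (∀ v ∈ G.V, H.w (fV v) = G.w v)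

/-- `G` and `H` are isomorphic graphs. -/
def Iso (H : MGraph) : Prop := ∃ fV fE, G.IsoMaps H fV fE

/-- The edge-contraction relation: `G ≤ H` iff `H = G/S₀` (up to isomorphism)
for some `S₀ ⊆ E(G)`. -/
noncomputable def contractLE (H : MGraph) : Prop :=
  ∃ S₀ ⊆ G.E, (G.contract S₀).Iso H

/-- One step from `u` to `v` along an `O`-directed edge (a bioriented edge may
be traversed in both directions). -/
def dirStep (O : Orient) (u v : ℕ) : Prop :=
  ∃ e ∈ G.E,
    (O e = some EdgeDir.fwd ∧ G.ends e = (u, v)) ∨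
    (O e = some EdgeDir.bwd ∧ G.ends e = (v, u)) ∨
    (O e = some EdgeDir.bi ∧ (G.ends e = (u, v) ∨ G.ends e = (v, u)))

/-- There is an `O`-directed path from the (bioriented) edge `e` to the
vertex `v`: a directed path starting at one of the ends of `e` and ending
at `v`. -/
def dirReachFromEdge (O : Orient) (e v : ℕ) : Prop :=
  ∃ u, ((G.ends e).1 = u ∨ (G.ends e).2 = u) ∧
    Relation.ReflTransGen (G.dirStep O) u v

end MGraph

/-! ### Generic poset gadgets (for sets with an order, modulo an equivalence) -/

/-- `le` is a partial order on `{a | P a}` modulo the identification `eqv`. -/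
def IsPartialOrderOnMod {α : Type*} (P : α → Prop) (eqv le : α → α → Prop) : Prop :=
  (∀ a, P a → le a a) ∧
  (∀ a b c, P a → P b → P c → le a b → le b c → le a c) ∧
  (∀ a b, P a → P b → le a b → le b a → eqv a b)

/-- `le` is a partial order on `{a | P a}`. -/
def IsPartialOrderOn {α : Type*} (P : α → Prop) (le : α → α → Prop) : Prop :=
  IsPartialOrderOnMod P (· = ·) le

/-- `a'` covers `a` in `{a | P a}` ordered by `le`, modulo `eqv`. -/
def CoversOnMod {α : Type*} (P : α → Prop) (eqv le : α → α → Prop) (a a' : α) : Prop :=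
  P a ∧ P a' ∧ le a a' ∧ ¬ eqv a a' ∧
    ∀ c, P c → le a c → le c a' → (eqv c a ∨ eqv c a')

/-- `ρ` is a rank on `{a | P a}` ordered by `le`, modulo `eqv`:  along every
covering relation it increases by exactly `1`. -/
def IsRankOnMod {α : Type*} (P : α → Prop) (eqv le : α → α → Prop) (ρ : α → ℕ) : Prop :=
  ∀ a a', CoversOnMod P eqv le a a' → ρ a' = ρ a + 1

/-- `a'` covers `a` in `{a | P a}` ordered by `le`. -/
def CoversOn {α : Type*} (P : α → Prop) (le : α → α → Prop) : α → α → Prop :=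
  CoversOnMod P (· = ·) le

/-- `ρ` is a rank on `{a | P a}` ordered by `le`. -/
def IsRankOn {α : Type*} (P : α → Prop) (le : α → α → Prop) (ρ : α → ℕ) : Prop :=
  IsRankOnMod P (· = ·) le ρ

/-- `f` is a quotient of posets from `({a | P a}, lea)` onto `({b | Q b}, leb)`:
an order-preserving surjection such that any relation downstairs lifts to a
relation upstairs. -/
def IsPosetQuotient {α β : Type*} (P : α → Prop) (Q : β → Prop)
    (lea : α → α → Prop) (leb : β → β → Prop) (f : α → β) : Prop :=
  (∀ a, P a → Q (f a)) ∧
  (∀ a a', P a → P a' → lea a a' → leb (f a) (f a')) ∧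
  (∀ b, Q b → ∃ a, P a ∧ f a = b) ∧
  (∀ b b', Q b → Q b' → leb b b' →
    ∃ a a', P a ∧ P a' ∧ f a = b ∧ f a' = b' ∧ lea a a')

/-! ### Structures over the moduli of stable graphs -/

/-- Pairs `(G, S)` with `G` stable of genus `g` and `S ∈ A^b_G`. -/
noncomputable def PairStab (g b : ℕ) (p : MGraph × Finset ℕ) : Prop :=
  p.1.Stable g ∧ p.1.Ab b p.2

/-- Isomorphism of pairs `(G, S)`. -/
def PairIso (p q : MGraph × Finset ℕ) : Prop :=
  ∃ fV fE, p.1.IsoMaps q.1 fV fE ∧ p.2.image fE = q.2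

/-- The order on `A^b_g`: `(G,S) ≤ (H,T)` iff there is a contraction
`γ : G → H` (a contraction of `G` followed by an isomorphism onto `H`) with
`γ* T ⊆ S`. -/
noncomputable def AgLE (b : ℕ) (p q : MGraph × Finset ℕ) : Prop :=
  ∃ S₀ ⊆ p.1.E, ∃ fV fE, (p.1.contract S₀).IsoMaps q.1 fV fE ∧
    p.1.pullStar b (((p.1.contract S₀).E).filter fun e => fE e ∈ q.2) ⊆ p.2

/-- Triples `(G, S, O̅_S)` with `G` stable of genus `g`, `S ∈ A^b_G` and
`O_S ∈ 𝒪^b(G−S)` (representing elements of `𝒪̄𝒫^b_g`). -/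
noncomputable def TripP (g b : ℕ) (x : MGraph × Finset ℕ × Orient) : Prop :=
  x.1.Stable g ∧ x.1.Ab b x.2.1 ∧ x.1.MemOb x.2.1 b x.2.2

/-- Identification of triples: an isomorphism of the underlying graphs
carrying the subgraph and the class of the orientation (i.e. its divisor) of
one to the other. -/
noncomputable def TripEq (b : ℕ) (x y : MGraph × Finset ℕ × Orient) : Prop :=
  ∃ fV fE, x.1.IsoMaps y.1 fV fE ∧ x.2.1.image fE = y.2.1 ∧
    ∀ v ∈ x.1.V, y.1.divOr y.2.1 b y.2.2 (fV v) = x.1.divOr x.2.1 b x.2.2 v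

/-- The order on `𝒪̄𝒫^b_g`: `(G, O̅_S) ≤ (H, O̅_T)` iff there is a contraction
`γ : G → H` with `γ* T ⊆ S` and `γ̄_* O̅_S ≤ O̅_T`, the latter meaning that the
restriction of `O̅_T` to `H − γ_* S` equals `γ̄_* O̅_S` (compared through the
isomorphism, via the divisors). -/
noncomputable def OPgLE (b : ℕ) (x y : MGraph × Finset ℕ × Orient) : Prop :=
  ∃ S₀ ⊆ x.1.E, ∃ fV fE, (x.1.contract S₀).IsoMaps y.1 fV fE ∧
    x.1.pullStar b (((x.1.contract S₀).E).filter fun e => fE e ∈ y.2.1) ⊆ x.2.1 ∧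
    ∃ O', x.1.equivOr x.2.1 b O' x.2.2 ∧
      ((∀ e ∈ S₀, O' e ≠ some EdgeDir.bi) ∨ x.1.E \ (S₀ ∪ x.2.1) = ∅) ∧
      ∀ v ∈ (x.1.contract S₀).V,
        y.1.divOr ((x.2.1 \ S₀).image fE) b
            (restr y.2.2 (y.1.E \ (x.2.1 \ S₀).image fE)) (fV v)
          = (x.1.contract S₀).divOr (x.2.1 \ S₀) b
              (restr O' (x.1.E \ (S₀ ∪ x.2.1))) v

section RootedTFAE

open Relation

lemma dirT_pos_end {d : Option EdgeDir} {p : ℕ × ℕ} {v : ℕ}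
    (h : 0 < dirT d p v) : p.1 = v ∨ p.2 = v := by
  by_contra hc
  push_neg at hc
  rcases d with _ | d
  · simp [dirT] at h
  · rcases d <;> simp [dirT, hc.1, hc.2] at h

lemma sum_dirT_fwd (p : ℕ × ℕ) (Z : Finset ℕ) :
    ∑ v ∈ Z, dirT (some EdgeDir.fwd) p v = if p.2 ∈ Z then 1 else 0 := by
  simp [dirT]

lemma sum_dirT_bwd (p : ℕ × ℕ) (Z : Finset ℕ) :
    ∑ v ∈ Z, dirT (some EdgeDir.bwd) p v = if p.1 ∈ Z then 1 else 0 := by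
  simp [dirT]

lemma sum_dirT_bi (p : ℕ × ℕ) (Z : Finset ℕ) :
    ∑ v ∈ Z, dirT (some EdgeDir.bi) p v
      = (if p.1 ∈ Z then 1 else 0) + (if p.2 ∈ Z then 1 else 0) := by
  simp [dirT, Finset.sum_add_distrib]

variable (G : MGraph) (O : Orient) (e : ℕ)

lemma mem_ind {Z e' : _} : e' ∈ G.indEdges ∅ Z ↔
    e' ∈ G.E ∧ (G.ends e').1 ∈ Z ∧ (G.ends e').2 ∈ Z := by
  simp [MGraph.indEdges]

lemma mem_cut {Z e' : _} : e' ∈ G.cutEdges ∅ Z ↔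
    e' ∈ G.E ∧ (((G.ends e').1 ∈ Z ∧ (G.ends e').2 ∉ Z) ∨
      ((G.ends e').1 ∉ Z ∧ (G.ends e').2 ∈ Z)) := by
  simp [MGraph.cutEdges]

variable {G O e}

lemma e_mem (hbi : G.biE O = {e}) : e ∈ G.E ∧ O e = some EdgeDir.bi := by
  have h : e ∈ G.biE O := by rw [hbi]; exact Finset.mem_singleton_self e
  exact Finset.mem_filter.mp h

lemma o_cases (hO : G.IsOrientOn ∅ O) (hbi : G.biE O = {e}) {e' : ℕ}
    (he' : e' ∈ G.E) (hne : e' ≠ e) :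
    O e' = some EdgeDir.fwd ∨ O e' = some EdgeDir.bwd := by
  have h1 : O e' ≠ none := (hO e').mpr (by simpa using he')
  cases h : O e' with
  | none => exact absurd h h1
  | some d =>
    cases d with
    | fwd => exact Or.inl rfl
    | bwd => exact Or.inr rfl
    | bi =>
      exfalso
      have : e' ∈ G.biE O := Finset.mem_filter.mpr ⟨he', h⟩
      rw [hbi, Finset.mem_singleton] at this
      exact hne this

lemma sum_tOr (hO : G.IsOrientOn ∅ O) (hbi : G.biE O = {e}) (Z : Finset ℕ) :
    ∑ v ∈ Z, G.tOr O v
      = (G.indEdges ∅ Z).card + (if e ∈ G.indEdges ∅ Z then 1 else 0)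
        + G.tCut ∅ O Z := by
  have hsub : G.indEdges ∅ Z ⊆ G.E := fun x hx => (mem_ind G).mp hx |>.1
  have hstep : ∀ e' ∈ G.indEdges ∅ Z,
      ∑ v ∈ Z, dirT (O e') (G.ends e') v = 1 + (if e' = e then 1 else 0) := by
    intro e' he'
    obtain ⟨hE, h1, h2⟩ := (mem_ind G).mp he'
    by_cases hee : e' = e
    · subst hee
      rw [(e_mem hbi).2, sum_dirT_bi, if_pos h1, if_pos h2, if_pos rfl]
    · rcases o_cases hO hbi hE hee with h | h <;>
        rw [h] <;> simp [sum_dirT_fwd, sum_dirT_bwd, h1, h2, hee]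
  have hcomm : ∑ v ∈ Z, G.tOr O v
      = ∑ e' ∈ G.E, ∑ v ∈ Z, dirT (O e') (G.ends e') v := by
    simp only [MGraph.tOr]; exact Finset.sum_comm
  rw [hcomm, ← Finset.sum_sdiff hsub, Finset.sum_congr rfl hstep,
    Finset.sum_add_distrib, Finset.sum_const, smul_eq_mul, mul_one,
    Finset.sum_ite_eq', MGraph.tCut, Finset.sdiff_empty]
  omega

lemma tCut_pos_iff (Z : Finset ℕ) :
    0 < G.tCut ∅ O Z ↔ ∃ e' ∈ G.E \ G.indEdges ∅ Z, ∃ v ∈ Z,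
      0 < dirT (O e') (G.ends e') v := by
  rw [MGraph.tCut, Finset.sdiff_empty]
  constructor
  · intro h
    by_contra hc
    push_neg at hc
    have : ∑ e' ∈ G.E \ G.indEdges ∅ Z, ∑ v ∈ Z, dirT (O e') (G.ends e') v = 0 :=
      Finset.sum_eq_zero fun e' he' => Finset.sum_eq_zero fun v hv =>
        Nat.le_zero.mp (hc e' he' v hv)
    omega
  · rintro ⟨e', he', v, hv, hpos⟩
    calc 0 < dirT (O e') (G.ends e') v := hpos
      _ ≤ ∑ v ∈ Z, dirT (O e') (G.ends e') v :=
          Finset.single_le_sum (fun _ _ => Nat.zero_le _) hv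
      _ ≤ _ := Finset.single_le_sum
          (f := fun e' => ∑ v ∈ Z, dirT (O e') (G.ends e') v)
          (fun _ _ => Nat.zero_le _) he'

lemma a_to_b (hO : G.IsOrientOn ∅ O) (hbi : G.biE O = {e})
    (ha : G.RootedAt ∅ O e) :
    ∀ Z ⊆ G.V, Z.Nonempty → e ∉ G.indEdges ∅ Z → 0 < G.tCut ∅ O Z := by
  intro Z hZV hZne heZ
  by_contra h0
  have hzero : ∀ e' ∈ G.E \ G.indEdges ∅ Z, ∀ v ∈ Z,
      dirT (O e') (G.ends e') v = 0 := by
    intro e' he' v hv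
    by_contra hne
    exact h0 ((tCut_pos_iff Z).mpr ⟨e', he', v, hv, Nat.pos_of_ne_zero hne⟩)
  obtain ⟨heE, hOe⟩ := e_mem hbi
  have heD : e ∈ G.E \ G.indEdges ∅ Z := Finset.mem_sdiff.mpr ⟨heE, heZ⟩
  have h1 : (G.ends e).1 ∉ Z := by
    intro h
    have := hzero e heD (G.ends e).1 h
    simp [dirT, hOe] at this
  have h2 : (G.ends e).2 ∉ Z := by
    intro h
    have := hzero e heD (G.ends e).2 h
    simp [dirT, hOe] at this
  obtain ⟨hv1, hv2⟩ := G.ends_mem e heE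
  have heW : e ∈ G.indEdges ∅ (G.V \ Z) :=
    (mem_ind G).mpr ⟨heE, Finset.mem_sdiff.mpr ⟨hv1, h1⟩, Finset.mem_sdiff.mpr ⟨hv2, h2⟩⟩
  have hWne : G.V \ Z ≠ G.V := by
    intro h
    obtain ⟨z, hz⟩ := hZne
    have : z ∈ G.V \ Z := by rw [h]; exact hZV hz
    exact (Finset.mem_sdiff.mp this).2 hz
  obtain ⟨e', he', v, hv, hpos⟩ := ha (G.V \ Z) Finset.sdiff_subset hWne heW
  have hvZ : v ∈ Z := by
    rw [Finset.sdiff_sdiff_self_left] at hv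
    exact (Finset.mem_inter.mp hv).2
  obtain ⟨he'E, hcut⟩ := (mem_cut G).mp he'
  have he'nind : e' ∉ G.indEdges ∅ Z := by
    intro h
    obtain ⟨_, hz1, hz2⟩ := (mem_ind G).mp h
    rcases hcut with ⟨ha', _⟩ | ⟨_, hb'⟩
    · exact (Finset.mem_sdiff.mp ha').2 hz1
    · exact (Finset.mem_sdiff.mp hb').2 hz2
  have := hzero e' (Finset.mem_sdiff.mpr ⟨he'E, he'nind⟩) v hvZ
  omega

lemma b_to_a
    (hb : ∀ Z ⊆ G.V, Z.Nonempty → e ∉ G.indEdges ∅ Z → 0 < G.tCut ∅ O Z) :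
    G.RootedAt ∅ O e := by
  intro Z hZV hZne heZ
  have hWne : (G.V \ Z).Nonempty := by
    obtain ⟨x, hxV, hxZ⟩ := Finset.exists_of_ssubset (hZV.ssubset_of_ne hZne)
    exact ⟨x, Finset.mem_sdiff.mpr ⟨hxV, hxZ⟩⟩
  obtain ⟨heE, hz1, hz2⟩ := (mem_ind G).mp heZ
  have heW : e ∉ G.indEdges ∅ (G.V \ Z) := by
    intro h
    exact (Finset.mem_sdiff.mp ((mem_ind G).mp h).2.1).2 hz1
  obtain ⟨e', he', v, hv, hpos⟩ :=
    (tCut_pos_iff _).mp (hb (G.V \ Z) Finset.sdiff_subset hWne heW)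
  obtain ⟨he'E, he'n⟩ := Finset.mem_sdiff.mp he'
  obtain ⟨hvV, hvZ⟩ := Finset.mem_sdiff.mp hv
  refine ⟨e', ?_, v, Finset.mem_sdiff.mpr ⟨hvV, hvZ⟩, hpos⟩
  obtain ⟨hm1, hm2⟩ := G.ends_mem e' he'E
  rcases dirT_pos_end hpos with h | h
  · -- (ends e').1 = v ∈ V \ Z
    have hn2 : (G.ends e').2 ∉ G.V \ Z := by
      intro hh
      exact he'n ((mem_ind G).mpr ⟨he'E, h ▸ hv, hh⟩)
    have : (G.ends e').2 ∈ Z := by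
      by_contra hc
      exact hn2 (Finset.mem_sdiff.mpr ⟨hm2, hc⟩)
    exact (mem_cut G).mpr ⟨he'E, Or.inr ⟨h ▸ hvZ, this⟩⟩
  · have hn1 : (G.ends e').1 ∉ G.V \ Z := by
      intro hh
      exact he'n ((mem_ind G).mpr ⟨he'E, hh, h ▸ hv⟩)
    have : (G.ends e').1 ∈ Z := by
      by_contra hc
      exact hn1 (Finset.mem_sdiff.mpr ⟨hm1, hc⟩)
    exact (mem_cut G).mpr ⟨he'E, Or.inl ⟨this, h ▸ hvZ⟩⟩

end RootedTFAE

section RootedTFAE2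

variable {G : MGraph} {O : Orient} {e : ℕ}

lemma connSub_nonempty {Z F : Finset ℕ} (h : G.ConnSub Z F) : Z.Nonempty := by
  rcases Z.eq_empty_or_nonempty with rfl | h'
  · exfalso
    rw [MGraph.ConnSub, MGraph.ncomp] at h
    have hE : IsEmpty {x : ℕ // x ∈ (∅ : Finset ℕ)} :=
      ⟨fun a => Finset.notMem_empty a.1 a.2⟩
    have hQ : IsEmpty (Quot fun u v : {x : ℕ // x ∈ (∅ : Finset ℕ)} =>
        G.adjOn F u.1 v.1) :=
      ⟨fun q => Quot.ind (β := fun _ => False) (fun a => hE.false a) q⟩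
    rw [Nat.card_of_isEmpty] at h
    exact one_ne_zero h.symm
  · exact h'

lemma c_to_b
    (hc : ∀ Z ⊆ G.V, Z.Nonempty → G.ConnSub Z (G.indEdges ∅ Z) →
      e ∉ G.indEdges ∅ Z → 0 < G.tCut ∅ O Z) :
    ∀ Z ⊆ G.V, Z.Nonempty → e ∉ G.indEdges ∅ Z → 0 < G.tCut ∅ O Z := by
  intro Z hZV hZne heZ
  obtain ⟨z, hz⟩ := hZne
  set R := Relation.EqvGen (G.adjOn (G.indEdges ∅ Z)) with hR
  set Z₁ := Z.filter (fun u => R z u) with hZ1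
  have hz1 : z ∈ Z₁ := Finset.mem_filter.mpr ⟨hz, Relation.EqvGen.refl z⟩
  have hZ1Z : Z₁ ⊆ Z := Finset.filter_subset _ _
  -- membership transfer along R
  have key2 : ∀ u v, R u v → (u ∈ Z₁ ↔ v ∈ Z₁) := by
    intro u v huv
    induction huv with
    | rel u v h =>
      obtain ⟨e', he', hor⟩ := h
      have he'i : e' ∈ G.indEdges ∅ Z := (Finset.mem_inter.mp he').1
      obtain ⟨_, hq1, hq2⟩ := (mem_ind G).mp he'i
      have huZ : u ∈ Z ∧ v ∈ Z := by
        rcases hor with h' | h' <;> rw [h'] at hq1 hq2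
        · exact ⟨hq1, hq2⟩
        · exact ⟨hq2, hq1⟩
      constructor
      · intro hu
        exact Finset.mem_filter.mpr ⟨huZ.2, Relation.EqvGen.trans _ _ _
          (Finset.mem_filter.mp hu).2 (Relation.EqvGen.rel _ _ ⟨e', he', hor⟩)⟩
      · intro hv
        exact Finset.mem_filter.mpr ⟨huZ.1, Relation.EqvGen.trans _ _ _
          (Finset.mem_filter.mp hv).2
          (Relation.EqvGen.symm _ _ (Relation.EqvGen.rel _ _ ⟨e', he', hor⟩))⟩
    | refl u => exact Iff.rfl
    | symm u v _ ih => exact ih.symm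
    | trans u v w _ _ ih1 ih2 => exact ih1.trans ih2
  -- edges of G[Z] with an end in Z₁ lie in G[Z₁]
  have key1 : ∀ e' ∈ G.indEdges ∅ Z,
      ((G.ends e').1 ∈ Z₁ ↔ (G.ends e').2 ∈ Z₁) := by
    intro e' he'
    refine key2 _ _ (Relation.EqvGen.rel _ _ ⟨e', ?_, Or.inl rfl⟩)
    exact Finset.mem_inter.mpr ⟨he', ((mem_ind G).mp he').1⟩
  have hind1 : G.indEdges ∅ Z₁ ⊆ G.indEdges ∅ Z := by
    intro e' h
    obtain ⟨hE, h1, h2⟩ := (mem_ind G).mp h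
    exact (mem_ind G).mpr ⟨hE, hZ1Z h1, hZ1Z h2⟩
  -- connectivity of Z₁
  have key6 : ∀ u v, R u v → ∀ (hu : u ∈ Z₁) (hv : v ∈ Z₁),
      Quot.mk (fun a b : {x : ℕ // x ∈ Z₁} => G.adjOn (G.indEdges ∅ Z₁) a.1 b.1)
          ⟨u, hu⟩
        = Quot.mk _ ⟨v, hv⟩ := by
    intro u v huv
    induction huv with
    | rel u v h =>
      intro hu hv
      obtain ⟨e', he', hor⟩ := h
      have he'i : e' ∈ G.indEdges ∅ Z := (Finset.mem_inter.mp he').1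
      have he'E : e' ∈ G.E := (Finset.mem_inter.mp he').2
      have hends : (G.ends e').1 ∈ Z₁ ∧ (G.ends e').2 ∈ Z₁ := by
        rcases hor with h' | h' <;> rw [h']
        · exact ⟨hu, hv⟩
        · exact ⟨hv, hu⟩
      have hin : e' ∈ G.indEdges ∅ Z₁ := (mem_ind G).mpr ⟨he'E, hends.1, hends.2⟩
      exact Quot.sound ⟨e', Finset.mem_inter.mpr ⟨hin, he'E⟩, hor⟩
    | refl u => intro hu hv; rfl
    | symm u v h ih =>
      intro hu hv
      exact (ih hv hu).symm
    | trans u v w h1 h2 ih1 ih2 =>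
      intro hu hw
      have hv : v ∈ Z₁ := (key2 u v h1).mp hu
      exact (ih1 hu hv).trans (ih2 hv hw)
  have hconn : G.ConnSub Z₁ (G.indEdges ∅ Z₁) := by
    rw [MGraph.ConnSub, MGraph.ncomp, Nat.card_eq_one_iff_unique]
    constructor
    · constructor
      intro a b
      induction a using Quot.ind with | _ x =>
      induction b using Quot.ind with | _ y =>
      have hx : R z x.1 := (Finset.mem_filter.mp x.2).2
      have hy : R z y.1 := (Finset.mem_filter.mp y.2).2
      have hxy : R x.1 y.1 :=
        Relation.EqvGen.trans _ _ _ (Relation.EqvGen.symm _ _ hx) hy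
      exact key6 x.1 y.1 hxy x.2 y.2
    · exact ⟨Quot.mk _ ⟨z, hz1⟩⟩
  -- tCut monotonicity
  have key7 : G.tCut ∅ O Z₁ ≤ G.tCut ∅ O Z := by
    rw [MGraph.tCut, MGraph.tCut, Finset.sdiff_empty]
    have hsub : G.E \ G.indEdges ∅ Z ⊆ G.E \ G.indEdges ∅ Z₁ :=
      Finset.sdiff_subset_sdiff (le_refl _) hind1
    have hvanish : ∀ e' ∈ G.E \ G.indEdges ∅ Z₁, e' ∉ G.E \ G.indEdges ∅ Z →
        ∑ v ∈ Z₁, dirT (O e') (G.ends e') v = 0 := by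
      intro e' h1 h2
      obtain ⟨he'E, he'n1⟩ := Finset.mem_sdiff.mp h1
      have he'Z : e' ∈ G.indEdges ∅ Z := by
        by_contra hcon
        exact h2 (Finset.mem_sdiff.mpr ⟨he'E, hcon⟩)
      refine Finset.sum_eq_zero fun v hv => ?_
      by_contra hne
      have hend := dirT_pos_end (Nat.pos_of_ne_zero hne)
      have hboth : (G.ends e').1 ∈ Z₁ ∧ (G.ends e').2 ∈ Z₁ := by
        rcases hend with h' | h'
        · have h1' : (G.ends e').1 ∈ Z₁ := h' ▸ hv
          exact ⟨h1', (key1 e' he'Z).mp h1'⟩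
        · have h2' : (G.ends e').2 ∈ Z₁ := h' ▸ hv
          exact ⟨(key1 e' he'Z).mpr h2', h2'⟩
      exact he'n1 ((mem_ind G).mpr ⟨he'E, hboth.1, hboth.2⟩)
    calc ∑ e' ∈ G.E \ G.indEdges ∅ Z₁, ∑ v ∈ Z₁, dirT (O e') (G.ends e') v
        = ∑ e' ∈ G.E \ G.indEdges ∅ Z, ∑ v ∈ Z₁, dirT (O e') (G.ends e') v :=
          (Finset.sum_subset hsub hvanish).symm
      _ ≤ ∑ e' ∈ G.E \ G.indEdges ∅ Z, ∑ v ∈ Z, dirT (O e') (G.ends e') v :=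
          Finset.sum_le_sum fun e' _ =>
            Finset.sum_le_sum_of_subset hZ1Z
  have heZ1 : e ∉ G.indEdges ∅ Z₁ := fun h => heZ (hind1 h)
  have := hc Z₁ (hZ1Z.trans hZV) ⟨z, hz1⟩ hconn heZ1
  omega

end RootedTFAE2

section RootedTFAE3

variable {G : MGraph} {O : Orient} {e : ℕ}

lemma ineq_iff (hO : G.IsOrientOn ∅ O) (hbi : G.biE O = {e})
    {Z : Finset ℕ} (hZV : Z ⊆ G.V) (hconn : G.ConnSub Z (G.indEdges ∅ Z)) :
    (G.subGenus Z (G.indEdges ∅ Z) - 1 < ∑ v ∈ Z, G.divOr ∅ 1 O v) ↔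
      (e ∈ G.indEdges ∅ Z ∨ 0 < G.tCut ∅ O Z) := by
  have heE : e ∈ G.E := (e_mem hbi).1
  have hEne : ¬(G.E \ (∅ : Finset ℕ) = ∅) := by
    rw [Finset.sdiff_empty]
    exact Finset.ne_empty_of_mem heE
  have hdiv : ∑ v ∈ Z, G.divOr ∅ 1 O v
      = (∑ v ∈ Z, (G.w v : ℤ)) - (Z.card : ℤ) + ((∑ v ∈ Z, G.tOr O v : ℕ) : ℤ) := by
    have hterm : ∀ v ∈ Z, G.divOr ∅ 1 O v = (G.w v : ℤ) - 1 + (G.tOr O v : ℤ) :=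
      fun v hv => by simp only [MGraph.divOr, if_pos (hZV hv), if_neg hEne]
    rw [Finset.sum_congr rfl hterm, Finset.sum_add_distrib,
      Finset.sum_sub_distrib, Finset.sum_const, Nat.cast_sum]
    push_cast
    ring
  have hinter : G.indEdges ∅ Z ∩ G.E = G.indEdges ∅ Z :=
    Finset.inter_eq_left.mpr (fun x hx => ((mem_ind G).mp hx).1)
  have hg : G.subGenus Z (G.indEdges ∅ Z)
      = (∑ v ∈ Z, (G.w v : ℤ)) - (Z.card : ℤ)
        + ((G.indEdges ∅ Z).card : ℤ) + 1 := by
    rw [MGraph.subGenus, hinter, hconn]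
    push_cast
    ring
  rw [hdiv, hg, sum_tOr hO hbi]
  by_cases h : e ∈ G.indEdges ∅ Z
  · simp only [if_pos h, h, true_or, iff_true]
    push_cast
    linarith [Int.natCast_nonneg (G.tCut ∅ O Z)]
  · simp only [if_neg h, h, false_or]
    push_cast
    constructor
    · intro hlt
      have : (0 : ℤ) < (G.tCut ∅ O Z : ℤ) := by linarith
      exact_mod_cast this
    · intro hpos
      have : (0 : ℤ) < (G.tCut ∅ O Z : ℤ) := by exact_mod_cast hpos
      linarith

end RootedTFAE3

/-- Characterizations of rooted (non-empty) `1`-orientations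
with bioriented edge `e`: (a) `e`-rooted ⟺ (b) `t^O(Z) > 0` for every
nonempty `Z ⊆ V` with `e ∉ G[Z]` ⟺ (c) idem for connected `G[Z]` ⟺
(d) `|d^O_Z| > g(Z) − 1` for every `Z ⊊ V` with `G[Z]` connected. -/
theorem rooted_tfae (G : MGraph) (O : Orient) (e : ℕ)
    (hO : G.IsOrientOn ∅ O) (hbi : G.biE O = {e}) :
    (G.RootedAt ∅ O e ↔
      ∀ Z ⊆ G.V, Z.Nonempty → e ∉ G.indEdges ∅ Z → 0 < G.tCut ∅ O Z) ∧
    (G.RootedAt ∅ O e ↔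
      ∀ Z ⊆ G.V, Z.Nonempty → G.ConnSub Z (G.indEdges ∅ Z) →
        e ∉ G.indEdges ∅ Z → 0 < G.tCut ∅ O Z) ∧
    (G.RootedAt ∅ O e ↔
      ∀ Z ⊆ G.V, Z ≠ G.V → G.ConnSub Z (G.indEdges ∅ Z) →
        G.subGenus Z (G.indEdges ∅ Z) - 1 < ∑ v ∈ Z, G.divOr ∅ 1 O v) := by
  have heE : e ∈ G.E := (e_mem hbi).1
  have hab : G.RootedAt ∅ O e ↔
      ∀ Z ⊆ G.V, Z.Nonempty → e ∉ G.indEdges ∅ Z → 0 < G.tCut ∅ O Z :=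
    ⟨fun h => a_to_b hO hbi h, fun h => b_to_a h⟩
  have hbc : (∀ Z ⊆ G.V, Z.Nonempty → e ∉ G.indEdges ∅ Z → 0 < G.tCut ∅ O Z) ↔
      (∀ Z ⊆ G.V, Z.Nonempty → G.ConnSub Z (G.indEdges ∅ Z) →
        e ∉ G.indEdges ∅ Z → 0 < G.tCut ∅ O Z) :=
    ⟨fun h Z h1 h2 _ h4 => h Z h1 h2 h4, fun h => c_to_b h⟩
  have hcd : (∀ Z ⊆ G.V, Z.Nonempty → G.ConnSub Z (G.indEdges ∅ Z) →
        e ∉ G.indEdges ∅ Z → 0 < G.tCut ∅ O Z) ↔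
      (∀ Z ⊆ G.V, Z ≠ G.V → G.ConnSub Z (G.indEdges ∅ Z) →
        G.subGenus Z (G.indEdges ∅ Z) - 1 < ∑ v ∈ Z, G.divOr ∅ 1 O v) := by
    constructor
    · intro h Z hZV hne hconn
      rw [ineq_iff hO hbi hZV hconn]
      by_cases he : e ∈ G.indEdges ∅ Z
      · exact Or.inl he
      · exact Or.inr (h Z hZV (connSub_nonempty hconn) hconn he)
    · intro h Z hZV hZne hconn heZ
      have hZV' : Z ≠ G.V := by
        rintro rfl
        exact heZ ((mem_ind G).mpr
          ⟨heE, (G.ends_mem e heE).1, (G.ends_mem e heE).2⟩)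
      rcases (ineq_iff hO hbi hZV hconn).mp (h Z hZV hZV' hconn) with h' | h'
      · exact absurd h' heZ
      · exact h'
  exact ⟨hab, hab.trans hbc, hab.trans (hbc.trans hcd)⟩
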